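/- For λ ∈ (0,1), k ≥ 1, n ≥ 1, the following contour integral identity holds: \widehat{b_λ^n}(k) = ((−1)^{n−k} / (2πi)) ∫_{∂𝔻} (1/u) · ((1−λ²)/|1−λu|²) · (b_λ(u))^k · u^{−n} du, where the integral is over the unit circle. -/

import Mathlib

open PowerSeries

noncomputable def Gser (l : ℂ) (N : ℕ) : PowerSeries ℂ :=
  PowerSeries.mk fun m => ((N + m).choose m : ℂ) * l ^ m

@[simp] lemma coeff_Gser (l : ℂ) (N m : ℕ) :
    PowerSeries.coeff m (Gser l N) = ((N + m).choose m : ℂ) * l ^ m := by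
  simp [Gser]

lemma oneSub_mul_Gser (l : ℂ) (N : ℕ) :
    (1 - PowerSeries.C l * X) * Gser l (N + 1) = Gser l N := by
  ext m
  rw [sub_mul, one_mul, map_sub, mul_assoc]
  cases m with
  | zero => simp
  | succ m =>
      rw [PowerSeries.coeff_C_mul, PowerSeries.coeff_succ_X_mul]
      simp only [coeff_Gser]
      have : (N + 1 + (m + 1)).choose (m + 1) = (N + 1 + m).choose (m+1) + (N + 1 + m).choose m := by
        rw [show N + 1 + (m+1) = (N + 1 + m) + 1 by ring, Nat.choose_succ_succ']
        ring
      rw [this]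
      push_cast
      ring

lemma coeff_succ_XsubC_mul (l : ℂ) (F : PowerSeries ℂ) (m : ℕ) :
    PowerSeries.coeff (m + 1) ((X - PowerSeries.C l) * F)
      = PowerSeries.coeff m F - l * PowerSeries.coeff (m + 1) F := by
  rw [sub_mul, map_sub, PowerSeries.coeff_succ_X_mul, PowerSeries.coeff_C_mul]

lemma rec_coeff (l : ℂ) (A B : PowerSeries ℂ)
    (h : (1 - PowerSeries.C l * X) * A = (X - PowerSeries.C l) * B) (m : ℕ) :
    PowerSeries.coeff (m + 1) A
      = l * PowerSeries.coeff m A + PowerSeries.coeff m B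
        - l * PowerSeries.coeff (m + 1) B := by
  have h2 := congrArg (PowerSeries.coeff (m + 1)) h
  rw [coeff_succ_XsubC_mul, sub_mul, one_mul, map_sub, mul_assoc,
    PowerSeries.coeff_C_mul, PowerSeries.coeff_succ_X_mul] at h2
  linear_combination h2

lemma coeff_one_mul' (A B : PowerSeries ℂ) :
    PowerSeries.coeff 1 (A * B)
      = PowerSeries.coeff 0 A * PowerSeries.coeff 1 B
        + PowerSeries.coeff 1 A * PowerSeries.coeff 0 B := by
  rw [PowerSeries.coeff_mul]
  rw [show (1:ℕ) = 0 + 1 by rfl, Finset.Nat.antidiagonal_succ]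
  simp [Finset.Nat.antidiagonal_zero, Prod.map]

lemma coeff_zero_XsubC_pow (l : ℂ) (m : ℕ) :
    PowerSeries.coeff 0 ((X - PowerSeries.C l) ^ m) = (-l) ^ m := by
  rw [PowerSeries.coeff_zero_eq_constantCoeff, map_pow]
  simp

lemma coeff_one_XsubC_pow (l : ℂ) (m : ℕ) :
    PowerSeries.coeff 1 ((X - PowerSeries.C l) ^ (m + 1)) = (m + 1) * (-l) ^ m := by
  induction m with
  | zero => simp
  | succ m ih =>
      rw [pow_succ, coeff_one_mul', coeff_zero_XsubC_pow, ih]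
      simp
      ring

theorem psMain (l : ℂ) (n' k' : ℕ) :
    PowerSeries.coeff (k' + 1) ((X - PowerSeries.C l) ^ (n' + 1) * Gser l n')
      = (-1 : ℂ) ^ n' * (-1 : ℂ) ^ k' * (1 - l ^ 2)
        * PowerSeries.coeff n' ((X - PowerSeries.C l) ^ k' * Gser l (k' + 1)) := by
  induction n' generalizing k' with
  | zero =>
      rw [pow_one, coeff_succ_XsubC_mul]
      rw [show PowerSeries.coeff 0 ((X - PowerSeries.C l) ^ k' * Gser l (k' + 1))
            = (-l)^k' by
        rw [PowerSeries.coeff_zero_eq_constantCoeff, map_mul, map_pow]; simp [Gser]]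
      simp only [coeff_Gser, Nat.zero_add, Nat.choose_self]
      rw [neg_pow]
      push_cast
      have hsq2 : ((-1:ℂ)^(k' * 2)) = 1 := by
        rw [mul_comm, pow_mul]; norm_num
      linear_combination (l^2*l^k' - l^k') * hsq2
  | succ n' ihn =>
      induction k' with
      | zero =>
          rw [show n' + 1 + 1 = (n' + 1) + 1 by rfl, coeff_one_mul', coeff_zero_XsubC_pow,
            coeff_one_XsubC_pow]
          simp only [pow_zero, one_mul, coeff_Gser]
          rw [show (n' + 1 + 1).choose 1 = n' + 2 by simp,
            show (n' + 1 + 0).choose 0 = 1 by simp,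
            show (0 + 1 + (n' + 1)).choose (n' + 1) = n' + 2 by
              rw [show 0 + 1 + (n' + 1) = (n' + 1) + 1 by ring, Nat.choose_symm_add]
              simp]
          push_cast
          rw [neg_pow]
          ring
      | succ k' ihk =>
          have hA : (1 - PowerSeries.C l * X) * ((X - PowerSeries.C l) ^ (n' + 1 + 1) * Gser l (n' + 1))
              = (X - PowerSeries.C l) * ((X - PowerSeries.C l) ^ (n' + 1) * Gser l n') := by
            rw [mul_left_comm, oneSub_mul_Gser]; ring
          have hB : (1 - PowerSeries.C l * X) * ((X - PowerSeries.C l) ^ (k' + 1) * Gser l (k' + 1 + 1))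
              = (X - PowerSeries.C l) * ((X - PowerSeries.C l) ^ k' * Gser l (k' + 1)) := by
            rw [mul_left_comm, oneSub_mul_Gser]; ring
          have E1 := rec_coeff l _ _ hA (k' + 1)
          have E2 := rec_coeff l _ _ hB n'
          have E3 := ihn (k' + 1)
          have E4 := ihn k'
          have E5 := ihk
          linear_combination E1 - (-1:ℂ)^n' * (-1:ℂ)^k' * (1 - l^2) * E2 - l*E3 + E4 + l*E5

open Complex

lemma sumPow (N : ℕ) (r : ℝ) (h0 : 0 ≤ r) (h1 : r < 1) :
    Summable (fun m : ℕ => ((m : ℝ) + 1) ^ N * r ^ m) := by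
  rcases eq_or_lt_of_le h0 with h | h
  · apply summable_of_ne_finset_zero (s := Finset.range 1)
    intro m hm
    simp only [Finset.mem_range, Nat.lt_one_iff] at hm
    rw [← h, zero_pow (by omega)]
    ring
  · have hf : Summable (fun m : ℕ => (m : ℝ) ^ N * r ^ m) :=
      summable_pow_mul_geometric_of_norm_lt_one N (by rwa [Real.norm_of_nonneg h0])
    have hf1 : Summable (fun m : ℕ => (((m + 1 : ℕ)) : ℝ) ^ N * r ^ (m + 1)) :=
      ((summable_nat_add_iff 1).2 hf)
    have := hf1.mul_left r⁻¹
    apply this.congr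
    intro m
    push_cast
    field_simp
    ring

lemma sumChoose (N : ℕ) (w : ℂ) (hw : ‖w‖ < 1) :
    Summable (fun m : ℕ => ((N + m).choose m : ℂ) * w ^ m) := by
  apply Summable.of_norm_bounded
    (g := fun m : ℕ => ((N : ℝ) + 1) ^ N * (((m : ℝ) + 1) ^ N * ‖w‖ ^ m))
    ((sumPow N ‖w‖ (norm_nonneg w) hw).mul_left _)
  intro m
  rw [norm_mul, norm_pow, Complex.norm_natCast]
  have hb : ((N + m).choose m : ℝ) ≤ ((N : ℝ) + 1) ^ N * ((m : ℝ) + 1) ^ N := by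
    have h1 : (N + m).choose m = (N + m).choose N := by
      rw [Nat.choose_symm_add]
    have h2 : (N + m).choose N ≤ (N + m) ^ N := Nat.choose_le_pow _ _
    have h3 : (N + m) ^ N ≤ ((N + 1) * (m + 1)) ^ N :=
      Nat.pow_le_pow_left (by nlinarith) N
    calc ((N + m).choose m : ℝ) = ((N + m).choose N : ℝ) := by rw [h1]
      _ ≤ (((N + 1) * (m + 1) : ℕ) ^ N : ℝ) := by exact_mod_cast le_trans h2 h3
      _ = ((N : ℝ) + 1) ^ N * ((m : ℝ) + 1) ^ N := by push_cast; rw [mul_pow]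
  calc ((N + m).choose m : ℝ) * ‖w‖ ^ m
      ≤ (((N : ℝ) + 1) ^ N * ((m : ℝ) + 1) ^ N) * ‖w‖ ^ m := by
        apply mul_le_mul_of_nonneg_right hb (pow_nonneg (norm_nonneg w) m)
    _ = ((N : ℝ) + 1) ^ N * (((m : ℝ) + 1) ^ N * ‖w‖ ^ m) := by ring

lemma hasSumChoose (N : ℕ) (w : ℂ) (hw : ‖w‖ < 1) :
    HasSum (fun m : ℕ => ((N + m).choose m : ℂ) * w ^ m) (((1 - w)⁻¹) ^ (N + 1)) := by
  have hw1 : (1 : ℂ) - w ≠ 0 := by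
    intro h
    have : w = 1 := by linear_combination -h
    rw [this] at hw; simp at hw
  induction N with
  | zero =>
      simpa using hasSum_geometric_of_norm_lt_one hw
  | succ N ih =>
      set S : ℕ → ℂ := fun m => ((N + 1 + m).choose m : ℂ) * w ^ m with hSdef
      have hT : HasSum S (∑' m, S m) := (sumChoose (N + 1) w hw).hasSum
      set T : ℂ := ∑' m, S m with hTdef
      -- shifted series
      set f : ℕ → ℂ := fun m => Nat.rec 0 (fun m' _ => w * S m') m with hfdef
      have hshift : (fun n : ℕ => f (n + 1)) = fun n => w * S n := rfl
      have h2 : HasSum f (w * T) := by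
        have := (hasSum_nat_add_iff (f := f) 1).mp (by rw [hshift]; exact hT.mul_left w)
        simpa [show f 0 = (0:ℂ) from rfl] using this
      have h3 : HasSum (fun m => S m - f m) (T - w * T) := hT.sub h2
      have h4 : (fun m => S m - f m) = fun m : ℕ => ((N + m).choose m : ℂ) * w ^ m := by
        funext m
        cases m with
        | zero => simp [hSdef, hfdef]
        | succ m =>
            show S (m + 1) - w * S m = _
            rw [hSdef]
            simp only
            have hc : (N + 1 + (m + 1)).choose (m + 1)
                = (N + (m + 1)).choose (m + 1) + (N + 1 + m).choose m := by
              rw [show N + 1 + (m + 1) = (N + (m + 1)) + 1 by ring, Nat.choose_succ_succ',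
                show N + (m + 1) = N + 1 + m by ring]
              ring
            rw [hc]
            push_cast
            ring
      rw [h4] at h3
      have h5 : T - w * T = ((1 - w)⁻¹) ^ (N + 1) := h3.unique ih
      have h6 : T = ((1 - w)⁻¹) ^ (N + 1 + 1) := by
        have h5' : (1 - w) * T = ((1 - w)⁻¹) ^ (N + 1) := by linear_combination h5
        have h7 : T = (1 - w)⁻¹ * ((1 - w) * T) := by field_simp
        rw [h7, h5', pow_succ]
        ring
      rw [← h6]
      exact hT

lemma contExp : Continuous fun t : ℝ => Complex.exp (t * I) := by
  exact (Complex.continuous_ofReal.mul continuous_const).cexp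

lemma normExp (t : ℝ) : ‖Complex.exp (t * I)‖ = 1 := by
  rw [Complex.norm_exp_ofReal_mul_I]

lemma expNe (t : ℝ) : Complex.exp (t * I) ≠ 0 := Complex.exp_ne_zero _

lemma intZpow (q : ℤ) :
    (∫ t in Set.Ioc (0:ℝ) (2 * Real.pi), Complex.exp (t * I) ^ q)
      = if q = 0 then (2 * Real.pi : ℂ) else 0 := by
  have h0 : (0:ℝ) ≤ 2 * Real.pi := by positivity
  rw [← intervalIntegral.integral_of_le h0]
  have hrw : ∀ t : ℝ, Complex.exp (t * I) ^ q = Complex.exp ((q * I) * t) := by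
    intro t
    rw [← Complex.exp_int_mul]
    ring_nf
  simp_rw [hrw]
  rcases eq_or_ne q 0 with h | h
  · subst h; simp
  · rw [if_neg h]
    rw [integral_exp_mul_complex (by simp [h, Complex.I_ne_zero])]
    have : Complex.exp ((q * I) * (2 * Real.pi : ℝ)) = 1 := by
      rw [show ((q:ℂ) * I) * (2 * Real.pi : ℝ) = (q : ℂ) * (2 * (Real.pi:ℂ) * I) by
        push_cast; ring]
      exact Complex.exp_int_mul_two_pi_mul_I q
    rw [this]
    simp

lemma coreIntegral (l : ℝ) (hl0 : 0 < l) (hl1 : l < 1) (N m j : ℕ) :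
    (∫ t in Set.Ioc (0:ℝ) (2 * Real.pi),
        Complex.exp (t * I) ^ (j : ℤ)
          * ((1 - (l:ℂ) * Complex.exp (t * I))⁻¹) ^ (N + 1)
          * Complex.exp (t * I) ^ (-(m : ℤ)))
      = if j ≤ m then
          (2 * Real.pi : ℂ) * (((N + (m - j)).choose (m - j) : ℂ)) * (l:ℂ) ^ (m - j)
        else 0 := by
  have hnorm : ∀ t : ℝ, ‖(l:ℂ) * Complex.exp (t * I)‖ < 1 := by
    intro t
    rw [norm_mul, normExp, mul_one, Complex.norm_real, Real.norm_of_nonneg hl0.le]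
    exact hl1
  set F : ℕ → ℝ → ℂ := fun i t =>
    ((N + i).choose i : ℂ) * (l:ℂ) ^ i * Complex.exp (t * I) ^ ((i : ℤ) + j - m) with hF
  -- pointwise expansion
  have hpt : ∀ t : ℝ,
      Complex.exp (t * I) ^ (j : ℤ) * ((1 - (l:ℂ) * Complex.exp (t * I))⁻¹) ^ (N + 1)
          * Complex.exp (t * I) ^ (-(m : ℤ))
        = ∑' i, F i t := by
    intro t
    have hs := (hasSumChoose N ((l:ℂ) * Complex.exp (t * I)) (hnorm t)).mul_left
      (Complex.exp (t * I) ^ (j : ℤ) * Complex.exp (t * I) ^ (-(m : ℤ)))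
    have hfun : (fun i => (Complex.exp (t * I) ^ (j : ℤ) * Complex.exp (t * I) ^ (-(m : ℤ)))
        * (((N + i).choose i : ℂ) * ((l:ℂ) * Complex.exp (t * I)) ^ i)) = fun i => F i t := by
      funext i
      rw [hF]
      simp only
      rw [mul_pow, ← zpow_natCast (Complex.exp (t * I)) i,
        show (i:ℤ) + j - m = (j:ℤ) + (-(m:ℤ)) + (i:ℤ) by ring,
        zpow_add₀ (expNe t), zpow_add₀ (expNe t)]
      ring
    rw [hfun] at hs
    rw [hs.tsum_eq]
    ring
  rw [MeasureTheory.setIntegral_congr_fun measurableSet_Ioc (fun t _ => hpt t)]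
  -- interchange
  have hInt : ∀ i : ℕ, MeasureTheory.IntegrableOn (F i) (Set.Ioc (0:ℝ) (2 * Real.pi)) := by
    intro i
    apply Continuous.integrableOn_Ioc
    apply continuous_const.mul
    apply Continuous.zpow₀ contExp
    intro t
    exact Or.inl (expNe t)
  have hnormF : ∀ (i : ℕ) (t : ℝ), ‖F i t‖ = ((N + i).choose i : ℝ) * l ^ i := by
    intro i t
    rw [hF]
    simp only
    rw [norm_mul, norm_mul, norm_zpow, normExp, one_zpow, mul_one,
      Complex.norm_natCast, norm_pow, Complex.norm_real, Real.norm_of_nonneg hl0.le]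
  have hIntNorm : ∀ i : ℕ, (∫ t in Set.Ioc (0:ℝ) (2 * Real.pi), ‖F i t‖)
      = (2 * Real.pi) * (((N + i).choose i : ℝ) * l ^ i) := by
    intro i
    simp_rw [hnormF]
    rw [MeasureTheory.setIntegral_const, Real.volume_real_Ioc, sub_zero, smul_eq_mul,
      max_eq_left (by positivity)]
  have hRe : Summable (fun i : ℕ => ((N + i).choose i : ℝ) * l ^ i) := by
    have h1 : ‖(l : ℂ)‖ < 1 := by
      rw [Complex.norm_real, Real.norm_of_nonneg hl0.le]; exact hl1
    apply (summable_norm_iff.mpr (sumChoose N (l:ℂ) h1)).congr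
    intro i
    rw [norm_mul, Complex.norm_natCast, norm_pow, Complex.norm_real,
      Real.norm_of_nonneg hl0.le]
  have hSum : Summable (fun i : ℕ => ∫ t in Set.Ioc (0:ℝ) (2 * Real.pi), ‖F i t‖) := by
    simp_rw [hIntNorm]
    exact hRe.mul_left _
  rw [← MeasureTheory.integral_tsum_of_summable_integral_norm (fun i => hInt i) hSum]
  have hval : ∀ i : ℕ, (∫ t in Set.Ioc (0:ℝ) (2 * Real.pi), F i t)
      = ((N + i).choose i : ℂ) * (l:ℂ) ^ i
        * (if ((i : ℤ) + j - m) = 0 then (2 * Real.pi : ℂ) else 0) := by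
    intro i
    rw [hF]
    simp only
    rw [MeasureTheory.integral_const_mul, intZpow]
  simp_rw [hval]
  rcases le_or_gt j m with h | h
  · rw [if_pos h]
    rw [tsum_eq_single (m - j) ?_]
    · rw [if_pos (by omega)]
      ring
    · intro i hi
      rw [if_neg (by omega), mul_zero]
  · rw [if_neg (by omega)]
    have : ∀ i : ℕ, ((N + i).choose i : ℂ) * (l:ℂ) ^ i
        * (if ((i : ℤ) + j - m) = 0 then (2 * Real.pi : ℂ) else 0) = 0 := by
      intro i
      rw [if_neg (by omega), mul_zero]
    simp_rw [this]
    exact tsum_zero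

lemma keyIntegral (l : ℝ) (hl0 : 0 < l) (hl1 : l < 1) (N m : ℕ) (P : Polynomial ℂ) :
    (∫ t in Set.Ioc (0:ℝ) (2 * Real.pi),
        Polynomial.eval (Complex.exp (t * I)) P
          * ((1 - (l:ℂ) * Complex.exp (t * I))⁻¹) ^ (N + 1)
          * Complex.exp (t * I) ^ (-(m : ℤ)))
      = (2 * Real.pi : ℂ) * ∑ j ∈ Finset.range (m + 1),
          P.coeff j * (((N + (m - j)).choose (m - j) : ℂ)) * (l:ℂ) ^ (m - j) := by
  set d := P.natDegree with hd
  have hcong : ∀ t ∈ Set.Ioc (0:ℝ) (2 * Real.pi),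
      Polynomial.eval (Complex.exp (t * I)) P
          * ((1 - (l:ℂ) * Complex.exp (t * I))⁻¹) ^ (N + 1)
          * Complex.exp (t * I) ^ (-(m : ℤ))
      = ∑ j ∈ Finset.range (d + 1), P.coeff j *
          (Complex.exp (t * I) ^ (j : ℤ)
            * ((1 - (l:ℂ) * Complex.exp (t * I))⁻¹) ^ (N + 1)
            * Complex.exp (t * I) ^ (-(m : ℤ))) := by
    intro t _
    rw [Polynomial.eval_eq_sum_range, Finset.sum_mul, Finset.sum_mul]
    apply Finset.sum_congr rfl
    intro j _
    rw [zpow_natCast]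
    ring
  rw [MeasureTheory.setIntegral_congr_fun measurableSet_Ioc hcong]
  rw [MeasureTheory.integral_finset_sum]
  swap
  · intro j _
    apply (Continuous.integrableOn_Ioc)
    refine continuous_const.mul (Continuous.mul (Continuous.mul ?_ ?_) ?_)
    · exact contExp.zpow₀ _ (fun t => Or.inl (expNe t))
    · apply Continuous.pow
      apply Continuous.inv₀ (by fun_prop)
      intro t h
      have h2 : ‖(l:ℂ) * Complex.exp (t * I)‖ < 1 := by
        rw [norm_mul, normExp, mul_one, Complex.norm_real, Real.norm_of_nonneg hl0.le]
        exact hl1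
      rw [sub_eq_zero] at h
      rw [← h] at h2
      simp at h2
    · exact contExp.zpow₀ _ (fun t => Or.inl (expNe t))
  have hterm : ∀ j : ℕ, (∫ t in Set.Ioc (0:ℝ) (2 * Real.pi),
      P.coeff j * (Complex.exp (t * I) ^ (j : ℤ)
        * ((1 - (l:ℂ) * Complex.exp (t * I))⁻¹) ^ (N + 1)
        * Complex.exp (t * I) ^ (-(m : ℤ))))
      = P.coeff j * (if j ≤ m then
          (2 * Real.pi : ℂ) * (((N + (m - j)).choose (m - j) : ℂ)) * (l:ℂ) ^ (m - j)
        else 0) := by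
    intro j
    rw [MeasureTheory.integral_const_mul, coreIntegral l hl0 hl1 N m j]
  simp_rw [hterm]
  rw [Finset.mul_sum]
  set h : ℕ → ℂ := fun j => if j ≤ m then
      (2 * Real.pi : ℂ) * (P.coeff j * (((N + (m - j)).choose (m - j) : ℂ)) * (l:ℂ) ^ (m - j))
    else 0 with hh
  calc (∑ j ∈ Finset.range (d+1), P.coeff j * (if j ≤ m then
          (2 * Real.pi : ℂ) * (((N + (m - j)).choose (m - j) : ℂ)) * (l:ℂ) ^ (m - j)
        else 0))
      = ∑ j ∈ Finset.range (d+1), h j := by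
        apply Finset.sum_congr rfl
        intro j _
        rw [hh]
        simp only
        split
        · ring
        · rw [mul_zero]
    _ = ∑ j ∈ Finset.range (max d m + 1), h j := by
        apply Finset.sum_subset (Finset.range_subset_range.2 (by omega))
        intro x hx hnx
        rw [hh]
        simp only
        split
        · rw [Polynomial.coeff_eq_zero_of_natDegree_lt (by
            simp only [Finset.mem_range] at hnx; omega)]
          ring
        · rfl
    _ = ∑ j ∈ Finset.range (m + 1), h j := by
        symm
        apply Finset.sum_subset (Finset.range_subset_range.2 (by omega))
        intro x hx hnx
        rw [hh]
        simp only [Finset.mem_range] at hnx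
        simp only
        rw [if_neg (by omega)]
    _ = ∑ j ∈ Finset.range (m + 1),
          (2 * Real.pi : ℂ) * (P.coeff j * (((N + (m - j)).choose (m - j) : ℂ)) * (l:ℂ) ^ (m - j)) := by
        apply Finset.sum_congr rfl
        intro j hj
        simp only [Finset.mem_range] at hj
        rw [hh]
        simp only
        rw [if_pos (by omega)]

lemma sumCoeff (l : ℂ) (N m : ℕ) (P : Polynomial ℂ) :
    (∑ j ∈ Finset.range (m + 1),
        P.coeff j * (((N + (m - j)).choose (m - j) : ℂ)) * l ^ (m - j))
      = PowerSeries.coeff m ((P : PowerSeries ℂ) * Gser l N) := by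
  rw [PowerSeries.coeff_mul, Finset.Nat.sum_antidiagonal_eq_sum_range_succ_mk]
  apply Finset.sum_congr rfl
  intro j hj
  rw [Polynomial.coeff_coe, coeff_Gser]
  ring

lemma coeBridge (l : ℂ) (a : ℕ) :
    (((Polynomial.X - Polynomial.C l) ^ a : Polynomial ℂ) : PowerSeries ℂ)
      = (PowerSeries.X - PowerSeries.C l) ^ a := by
  rw [Polynomial.coe_pow, Polynomial.coe_sub, Polynomial.coe_X, Polynomial.coe_C]

lemma oneSubNe (l : ℝ) (hl0 : 0 < l) (hl1 : l < 1) (t : ℝ) :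
    (1 : ℂ) - (l:ℂ) * Complex.exp (t * I) ≠ 0 := by
  intro h
  have h2 : ‖(l:ℂ) * Complex.exp (t * I)‖ < 1 := by
    rw [norm_mul, normExp, mul_one, Complex.norm_real, Real.norm_of_nonneg hl0.le]
    exact hl1
  rw [sub_eq_zero] at h
  rw [← h] at h2
  simp at h2

lemma subNe (l : ℝ) (hl0 : 0 < l) (hl1 : l < 1) (t : ℝ) :
    Complex.exp (t * I) - (l:ℂ) ≠ 0 := by
  intro h
  rw [sub_eq_zero] at h
  have h1 := normExp t
  rw [h, Complex.norm_real, Real.norm_of_nonneg hl0.le] at h1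
  linarith





open Complex

/-- Contour-integral identity: for `λ ∈ (0,1)`, `k ≥ 1`, `n ≥ 1`,
`\widehat{b_λ^n}(k) = ((−1)^{n−k}/(2πi)) ∫_{∂𝔻} (1/u)((1−λ²)/|1−λu|²) b_λ(u)^k u^{−n} du`,
with both contour integrals written through the parametrization `z = e^{it}`,
`dz = i e^{it} dt` (so `(1/(2πi))∫ f dz = (1/(2π))∫₀^{2π} f(e^{it}) e^{it} dt`). -/
theorem stmt11 (l : ℝ) (hl : l ∈ Set.Ioo (0 : ℝ) 1) (n k : ℕ) (hn : 1 ≤ n) (hk : 1 ≤ k) :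
    (1 / (2 * (Real.pi : ℂ)))
        * ∫ t in (0 : ℝ)..(2 * Real.pi),
            ((Complex.exp (t * Complex.I) - (l : ℂ))
                / (1 - (l : ℂ) * Complex.exp (t * Complex.I))) ^ n
              * Complex.exp (t * Complex.I) ^ (-(k : ℤ) - 1)
              * Complex.exp (t * Complex.I)
      = (-1 : ℂ) ^ ((n : ℤ) - (k : ℤ)) * (1 / (2 * (Real.pi : ℂ)))
        * ∫ t in (0 : ℝ)..(2 * Real.pi),
            (Complex.exp (t * Complex.I))⁻¹
              * (((1 - l ^ 2)
                  / ‖1 - (l : ℂ) * Complex.exp (t * Complex.I)‖ ^ 2 : ℝ) : ℂ)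
              * ((Complex.exp (t * Complex.I) - (l : ℂ))
                  / (1 - (l : ℂ) * Complex.exp (t * Complex.I))) ^ k
              * Complex.exp (t * Complex.I) ^ (-(n : ℤ))
              * Complex.exp (t * Complex.I) := by
  obtain ⟨hl0, hl1⟩ := hl
  obtain ⟨n', rfl⟩ : ∃ n', n = n' + 1 := ⟨n - 1, by omega⟩
  obtain ⟨k', rfl⟩ : ∃ k', k = k' + 1 := ⟨k - 1, by omega⟩
  have h2pi : (0:ℝ) ≤ 2 * Real.pi := by positivity
  have hπ : (Real.pi : ℂ) ≠ 0 := by exact_mod_cast Real.pi_ne_zero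
  rw [intervalIntegral.integral_of_le h2pi, intervalIntegral.integral_of_le h2pi]
  have hLpt : ∀ t ∈ Set.Ioc (0:ℝ) (2 * Real.pi),
      ((Complex.exp (t * Complex.I) - (l : ℂ))
          / (1 - (l : ℂ) * Complex.exp (t * Complex.I))) ^ (n' + 1)
        * Complex.exp (t * Complex.I) ^ (-((k' + 1 : ℕ) : ℤ) - 1)
        * Complex.exp (t * Complex.I)
      = Polynomial.eval (Complex.exp (t * I))
            ((Polynomial.X - Polynomial.C ((l:ℝ):ℂ)) ^ (n' + 1))
          * ((1 - (l:ℂ) * Complex.exp (t * I))⁻¹) ^ (n' + 1)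
          * Complex.exp (t * I) ^ (-(((k' + 1 : ℕ)) : ℤ)) := by
    intro t _
    rw [mul_assoc, ← zpow_add_one₀ (expNe t),
      show (-((k' + 1 : ℕ) : ℤ) - 1 + 1) = -(((k' + 1 : ℕ)) : ℤ) by ring,
      div_pow, Polynomial.eval_pow, Polynomial.eval_sub, Polynomial.eval_X,
      Polynomial.eval_C, div_eq_mul_inv, ← inv_pow]
  rw [MeasureTheory.setIntegral_congr_fun measurableSet_Ioc hLpt,
    keyIntegral l hl0 hl1 n' (k' + 1) _, sumCoeff, coeBridge]
  have hRpt : ∀ t ∈ Set.Ioc (0:ℝ) (2 * Real.pi),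
      (Complex.exp (t * Complex.I))⁻¹
          * (((1 - l ^ 2)
              / ‖1 - (l : ℂ) * Complex.exp (t * Complex.I)‖ ^ 2 : ℝ) : ℂ)
          * ((Complex.exp (t * Complex.I) - (l : ℂ))
              / (1 - (l : ℂ) * Complex.exp (t * Complex.I))) ^ (k' + 1)
          * Complex.exp (t * Complex.I) ^ (-((n' + 1 : ℕ) : ℤ))
          * Complex.exp (t * Complex.I)
      = (1 - (l:ℂ) ^ 2) *
          (Polynomial.eval (Complex.exp (t * I))
              ((Polynomial.X - Polynomial.C ((l:ℝ):ℂ)) ^ k')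
            * ((1 - (l:ℂ) * Complex.exp (t * I))⁻¹) ^ (k' + 1 + 1)
            * Complex.exp (t * I) ^ (-((n' : ℕ) : ℤ))) := by
    intro t _
    have hz := expNe t
    have hw := oneSubNe l hl0 hl1 t
    have hzl := subNe l hl0 hl1 t
    have hconj : ((‖1 - (l:ℂ) * Complex.exp (t * I)‖ ^ 2 : ℝ) : ℂ)
        = (1 - (l:ℂ) * Complex.exp (t * I)) * (1 - (l:ℂ) * (Complex.exp (t * I))⁻¹) := by
      rw [Complex.sq_norm, ← Complex.mul_conj]
      congr 1
      rw [map_sub, map_one, map_mul, Complex.conj_ofReal]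
      congr 1
      rw [← Complex.exp_conj, map_mul, Complex.conj_ofReal, Complex.conj_I, mul_neg,
        Complex.exp_neg]
    rw [mul_assoc, mul_assoc, ← zpow_add_one₀ (expNe t),
      show (-((n' + 1 : ℕ) : ℤ) + 1) = -((n' : ℕ) : ℤ) by push_cast; ring]
    rw [Complex.ofReal_div, hconj, div_pow, Polynomial.eval_pow, Polynomial.eval_sub,
      Polynomial.eval_X, Polynomial.eval_C]
    have hw2 : (1 : ℂ) - (l:ℂ) * (Complex.exp (t * I))⁻¹ ≠ 0 := by
      rw [show (1 : ℂ) - (l:ℂ) * (Complex.exp (t * I))⁻¹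
          = (Complex.exp (t * I))⁻¹ * (Complex.exp (t * I) - l) by field_simp]
      exact mul_ne_zero (inv_ne_zero hz) hzl
    push_cast
    simp only [inv_pow, div_eq_mul_inv]
    field_simp
    ring
  rw [MeasureTheory.setIntegral_congr_fun measurableSet_Ioc hRpt,
    MeasureTheory.integral_const_mul, keyIntegral l hl0 hl1 (k' + 1) n' _, sumCoeff, coeBridge]
  rw [psMain ((l:ℝ):ℂ) n' k']
  have hsign : (-1 : ℂ) ^ (((n' + 1 : ℕ) : ℤ) - ((k' + 1 : ℕ) : ℤ))
      = (-1 : ℂ) ^ n' * (-1 : ℂ) ^ k' := by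
    rw [show (((n' + 1 : ℕ) : ℤ) - ((k' + 1 : ℕ) : ℤ)) = (n' : ℤ) - (k' : ℤ) by push_cast; ring,
      zpow_sub₀ (by norm_num : (-1:ℂ) ≠ 0), zpow_natCast, zpow_natCast, div_eq_mul_inv, ← inv_pow, inv_neg,
      inv_one]
  rw [hsign]
  field_simp
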